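/- Let (X, μ) be a probability space, Φ : X → X a measurable, measure-preserving bijection with measurable inverse, and ε : X → X a measurable, measure-preserving map with ε ∘ ε = id and ε ∘ Φ = Φ⁻¹ ∘ ε. Let Ψ : X → ℝ^N be measurable with integrable pairwise products of the form Ψ_i(x)·Ψ_j(Φ^{±1}(x)), and let M ∈ ℝ^{N×N} satisfy Ψ(ε(x)) = M·Ψ(x) for all x ∈ X. Then the correlator matrix G(i,j) := ∫_X Ψ_i(Φ(x))·Ψ_j(x) dμ(x) satisfies G = M · Gᵀ · Mᵀ. -/
import Mathlib


open MeasureTheory Matrix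

/-- Onsager–Casimir symmetry relation for correlators: if `ε` is a measure-preserving
involution with `ε ∘ Φ = Φ⁻¹ ∘ ε` and the observables transform as `Ψ ∘ ε = M·Ψ`,
then `G = M · Gᵀ · Mᵀ`, where `G(i,j) = ∫ Ψᵢ(Φx)·Ψⱼ(x) dμ = ⟨Ψᵢ(t)Ψⱼ(0)⟩`. -/
theorem onsager_casimir_correlator_symmetry
    {X : Type*} [MeasurableSpace X] (μ : Measure X) [IsProbabilityMeasure μ]
    (N : ℕ) (Φ Φinv ε : X → X)
    (hΦ : Measurable Φ) (hΦinv : Measurable Φinv) (hε : Measurable ε)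
    (hleft : Function.LeftInverse Φinv Φ)
    (hright : Function.RightInverse Φinv Φ)
    (hpres : MeasurePreserving Φ μ μ)
    (hεpres : MeasurePreserving ε μ μ)
    (hεinv : ε ∘ ε = id)
    (hεΦ : ε ∘ Φ = Φinv ∘ ε)
    (Ψ : X → Fin N → ℝ) (hΨ : Measurable Ψ)
    (hint1 : ∀ i j, Integrable (fun x => Ψ x i * Ψ (Φ x) j) μ)
    (hint2 : ∀ i j, Integrable (fun x => Ψ x i * Ψ (Φinv x) j) μ)
    (M : Matrix (Fin N) (Fin N) ℝ)
    (hM : ∀ x, Ψ (ε x) = M.mulVec (Ψ x)) :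
    (Matrix.of fun i j => ∫ x, Ψ (Φ x) i * Ψ x j ∂μ) =
      M * (Matrix.of fun i j => ∫ x, Ψ (Φ x) i * Ψ x j ∂μ)ᵀ * Mᵀ := by
  have hεx : ∀ x, ε (ε x) = x := fun x => congrFun hεinv x
  have h1 : ∀ x, ε (Φ x) = Φinv (ε x) := fun x => congrFun hεΦ x
  have h2 : ∀ x, Φ (ε x) = ε (Φinv x) := by
    intro x
    calc Φ (ε x) = ε (ε (Φ (ε x))) := (hεx _).symm
      _ = ε (Φinv (ε (ε x))) := by rw [h1]
      _ = ε (Φinv x) := by rw [hεx]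
  have hεemb : MeasurableEmbedding ε :=
    (MeasurableEquiv.mk ⟨ε, ε, hεx, hεx⟩ hε hε).measurableEmbedding
  have hΦemb : MeasurableEmbedding Φ :=
    (MeasurableEquiv.mk ⟨Φ, Φinv, hleft, hright⟩ hΦ hΦinv).measurableEmbedding
  ext i j
  have key : ∫ x, Ψ (Φ x) i * Ψ x j ∂μ
      = ∫ x, (M.mulVec (Ψ x)) i * (M.mulVec (Ψ (Φ x))) j ∂μ := by
    calc ∫ x, Ψ (Φ x) i * Ψ x j ∂μ
        = ∫ x, Ψ (Φ (ε x)) i * Ψ (ε x) j ∂μ :=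
          (hεpres.integral_comp hεemb (fun x => Ψ (Φ x) i * Ψ x j)).symm
      _ = ∫ x, (M.mulVec (Ψ (Φinv x))) i * (M.mulVec (Ψ x)) j ∂μ := by
          congr 1; funext x; rw [h2, hM, hM]
      _ = ∫ x, (M.mulVec (Ψ (Φinv (Φ x)))) i * (M.mulVec (Ψ (Φ x))) j ∂μ :=
          (hpres.integral_comp hΦemb
            (fun x => (M.mulVec (Ψ (Φinv x))) i * (M.mulVec (Ψ x)) j)).symm
      _ = ∫ x, (M.mulVec (Ψ x)) i * (M.mulVec (Ψ (Φ x))) j ∂μ := by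
          congr 1; funext x; rw [hleft]
  have expand : ∫ x, (M.mulVec (Ψ x)) i * (M.mulVec (Ψ (Φ x))) j ∂μ
      = ∑ k, ∑ l, M i k * M j l * ∫ x, Ψ x k * Ψ (Φ x) l ∂μ := by
    have : ∀ x : X, (M.mulVec (Ψ x)) i * (M.mulVec (Ψ (Φ x))) j
        = ∑ k, ∑ l, M i k * M j l * (Ψ x k * Ψ (Φ x) l) := by
      intro x
      simp only [Matrix.mulVec, dotProduct, Finset.sum_mul_sum]
      apply Finset.sum_congr rfl; intro k _
      apply Finset.sum_congr rfl; intro l _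
      ring
    simp_rw [this]
    rw [integral_finset_sum]
    · apply Finset.sum_congr rfl; intro k _
      rw [integral_finset_sum]
      · apply Finset.sum_congr rfl; intro l _
        rw [integral_const_mul]
      · intro l _
        exact (hint1 k l).const_mul _
    · intro k _
      exact integrable_finset_sum _ (fun l _ => (hint1 k l).const_mul _)
  rw [Matrix.mul_assoc]
  simp only [Matrix.mul_apply, Matrix.transpose_apply, Matrix.of_apply]
  rw [key, expand]
  apply Finset.sum_congr rfl; intro k _
  rw [Finset.mul_sum]
  apply Finset.sum_congr rfl; intro l _
  have : (∫ x, Ψ x k * Ψ (Φ x) l ∂μ) = ∫ x, Ψ (Φ x) l * Ψ x k ∂μ := by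
    congr 1; funext x; ring
  rw [this]; ring
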